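/- Let 0 < α < 1, 0 < h < 1, A > 0, and set γ = 1 + h^α·(1 − 17α/24 + α²/8), γ₁ = α − h^α·(11α/12 − α²/4), γ₂ = α(1−α)/2 + h^α·(5α/24 − α²/8), and γ_k = |w_k^(α)| for k ≥ 3. Suppose a real sequence (e_n) satisfies e_0 = 0 and, for every n ≥ 1, e_n = γ^(−1)·( γ₁·e_{n−1} + γ₂·e_{n−2} + Σ_{k=3}^n γ_k·e_{n−k} ) + A_n (with e_{−1} interpreted as 0 when n = 1), where |A_n| < A·h^(3+α) for all n ≥ 1. Then for all n ≥ 1, |e_n| < (10·A/((1−α)·2^α))·n^α·h^(3+α). -/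

import Mathlib

noncomputable def grunwaldW (α : ℝ) (n : ℕ) : ℝ :=
  (-1) ^ n * (Real.Gamma (α + 1) / (Real.Gamma ((n : ℝ) + 1) * Real.Gamma (α - (n : ℝ) + 1)))

open Finset

lemma gw_gamma_ne_zero {α : ℝ} (hα0 : 0 < α) (hα1 : α < 1) (n : ℕ) :
    Real.Gamma (α - (n : ℝ)) ≠ 0 := by
  apply Real.Gamma_ne_zero
  intro m
  rcases le_or_gt n m with H | H
  · have h1 : (n : ℝ) ≤ m := by exact_mod_cast H
    intro hc; linarith
  · have h1 : (m : ℝ) + 1 ≤ n := by exact_mod_cast H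
    intro hc; linarith

lemma grunwaldW_zero {α : ℝ} (hα0 : 0 < α) : grunwaldW α 0 = 1 := by
  have h1 : Real.Gamma (α + 1) ≠ 0 := (Real.Gamma_pos_of_pos (by linarith)).ne'
  simp [grunwaldW, Real.Gamma_one, div_self h1]

lemma grunwaldW_succ {α : ℝ} (hα0 : 0 < α) (hα1 : α < 1) (n : ℕ) :
    grunwaldW α (n + 1) = (1 - (α + 1) / ((n : ℝ) + 1)) * grunwaldW α n := by
  have hg1 : Real.Gamma ((n : ℝ) + 1) ≠ 0 :=
    (Real.Gamma_pos_of_pos (by positivity)).ne'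
  have hαn : α - (n : ℝ) ≠ 0 := by
    rcases Nat.eq_zero_or_pos n with h | h
    · subst h; simpa using hα0.ne'
    · have : (1 : ℝ) ≤ n := by exact_mod_cast h
      intro hc; linarith
  have hg2 : Real.Gamma (α - (n : ℝ)) ≠ 0 := gw_gamma_ne_zero hα0 hα1 n
  have key1 : Real.Gamma ((n : ℝ) + 1 + 1) = ((n : ℝ) + 1) * Real.Gamma ((n : ℝ) + 1) :=
    Real.Gamma_add_one (by positivity)
  have key2 : Real.Gamma (α - (n : ℝ) + 1) = (α - (n : ℝ)) * Real.Gamma (α - (n : ℝ)) :=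
    Real.Gamma_add_one hαn
  have hn1 : ((n : ℝ) + 1) ≠ 0 := by positivity
  simp only [grunwaldW]
  push_cast
  rw [show α - ((n : ℝ) + 1) + 1 = α - n by ring, key1, key2]
  field_simp
  ring

lemma grunwaldW_prod {α : ℝ} (hα0 : 0 < α) (hα1 : α < 1) (n : ℕ) :
    grunwaldW α (n + 1) = -(α / ((n : ℝ) + 1)) * ∏ k ∈ Icc 1 n, (1 - α / (k : ℝ)) := by
  induction n with
  | zero =>
      rw [grunwaldW_succ hα0 hα1 0, grunwaldW_zero hα0]
      norm_num
  | succ m ih =>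
      rw [grunwaldW_succ hα0 hα1 (m + 1), ih,
        Finset.prod_Icc_succ_top (by omega : 1 ≤ m + 1)]
      have h1 : ((m : ℝ) + 1) ≠ 0 := by positivity
      have h2 : ((m : ℝ) + 1 + 1) ≠ 0 := by positivity
      push_cast
      field_simp
      ring

lemma gw_prod_pos {α : ℝ} (hα0 : 0 < α) (hα1 : α < 1) (n : ℕ) :
    0 < ∏ k ∈ Icc 1 n, (1 - α / (k : ℝ)) := by
  apply Finset.prod_pos
  intro k hk
  have hk1 : 1 ≤ k := (Finset.mem_Icc.mp hk).1
  have hk1' : (1 : ℝ) ≤ (k : ℝ) := by exact_mod_cast hk1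
  have : α / (k : ℝ) ≤ α := div_le_self hα0.le hk1'
  linarith

lemma abs_grunwaldW {α : ℝ} (hα0 : 0 < α) (hα1 : α < 1) (n : ℕ) :
    |grunwaldW α (n + 1)| = α / ((n : ℝ) + 1) * ∏ k ∈ Icc 1 n, (1 - α / (k : ℝ)) := by
  have hP := gw_prod_pos hα0 hα1 n
  rw [grunwaldW_prod hα0 hα1, neg_mul, abs_neg, abs_of_nonneg]
  have : (0:ℝ) ≤ α / ((n : ℝ) + 1) := by positivity
  exact mul_nonneg this hP.le

lemma sum_abs_grunwaldW {α : ℝ} (hα0 : 0 < α) (hα1 : α < 1) (n : ℕ) :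
    ∑ k ∈ Icc 1 n, |grunwaldW α k| = 1 - ∏ k ∈ Icc 1 n, (1 - α / (k : ℝ)) := by
  induction n with
  | zero => simp
  | succ m ih =>
      rw [Finset.sum_Icc_succ_top (by omega : 1 ≤ m + 1),
        Finset.prod_Icc_succ_top (by omega : 1 ≤ m + 1), ih,
        abs_grunwaldW hα0 hα1 m]
      push_cast
      ring

lemma key_prod_lower {α : ℝ} (hα0 : 0 < α) (hα1 : α < 1) (n : ℕ) (hn : 1 ≤ n) :
    1 - α ≤ (n : ℝ) ^ α * ∏ k ∈ Icc 1 n, (1 - α / (k : ℝ)) := by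
  obtain ⟨m, rfl⟩ := Nat.exists_eq_add_of_le hn
  clear hn
  induction m with
  | zero =>
      simp [Finset.Icc_self, Real.one_rpow]
  | succ m ih =>
      have hN : (0:ℝ) < (m : ℝ) + 1 := by positivity
      have hN2 : (0:ℝ) < (m : ℝ) + 1 + 1 := by linarith
      have hP := gw_prod_pos hα0 hα1 (1 + m)
      -- Bernoulli step
      have hs : (-1 : ℝ) ≤ -(1 / ((m : ℝ) + 1 + 1)) := by
        rw [neg_le_neg_iff]
        rw [div_le_one hN2]; linarith
      have hb := rpow_one_add_le_one_add_mul_self hs hα0.le hα1.le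
      have heq : (1 : ℝ) + -(1 / ((m : ℝ) + 1 + 1)) = ((m : ℝ) + 1) / ((m : ℝ) + 1 + 1) := by
        field_simp
        ring
      rw [heq] at hb
      -- (m+1)^α ≤ (m+2)^α * (1 - α/(m+2))
      have hmul : ((m : ℝ) + 1) ^ α
          = (((m : ℝ) + 1) / ((m : ℝ) + 1 + 1)) ^ α * ((m : ℝ) + 1 + 1) ^ α := by
        rw [← Real.mul_rpow (by positivity) (by positivity)]
        congr 1
        field_simp
      have hstep : ((m : ℝ) + 1) ^ α ≤ (1 + α * -(1 / ((m : ℝ) + 1 + 1))) * ((m : ℝ) + 1 + 1) ^ α := by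
        rw [hmul]
        exact mul_le_mul_of_nonneg_right hb (Real.rpow_nonneg (by positivity) α)
      -- assemble
      have hprod : ∏ k ∈ Icc 1 (1 + (m + 1)), (1 - α / (k : ℝ))
          = (∏ k ∈ Icc 1 (1 + m), (1 - α / (k : ℝ))) * (1 - α / ((m : ℝ) + 1 + 1)) := by
        rw [show 1 + (m + 1) = (1 + m) + 1 by ring,
          Finset.prod_Icc_succ_top (by omega : 1 ≤ 1 + m + 1)]
        push_cast
        rw [show (1 + (m:ℝ) + 1) = (m:ℝ) + 1 + 1 from by ring]
      rw [hprod]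
      have hcast : ((1 + (m + 1) : ℕ) : ℝ) = (m : ℝ) + 1 + 1 := by push_cast; ring
      have hcast2 : ((1 + m : ℕ) : ℝ) = (m : ℝ) + 1 := by push_cast; ring
      rw [hcast]
      rw [hcast2] at ih
      have hkey : ((m : ℝ) + 1) ^ α * ∏ k ∈ Icc 1 (1 + m), (1 - α / (k : ℝ))
          ≤ ((m : ℝ) + 1 + 1) ^ α * ((∏ k ∈ Icc 1 (1 + m), (1 - α / (k : ℝ))) * (1 - α / ((m : ℝ) + 1 + 1))) := by
        have h1 : (1 + α * -(1 / ((m : ℝ) + 1 + 1))) = 1 - α / ((m : ℝ) + 1 + 1) := by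
          field_simp
          ring
        rw [h1] at hstep
        calc ((m : ℝ) + 1) ^ α * ∏ k ∈ Icc 1 (1 + m), (1 - α / (k : ℝ))
            ≤ ((1 - α / ((m : ℝ) + 1 + 1)) * ((m : ℝ) + 1 + 1) ^ α) * ∏ k ∈ Icc 1 (1 + m), (1 - α / (k : ℝ)) :=
              mul_le_mul_of_nonneg_right hstep hP.le
          _ = ((m : ℝ) + 1 + 1) ^ α * ((∏ k ∈ Icc 1 (1 + m), (1 - α / (k : ℝ))) * (1 - α / ((m : ℝ) + 1 + 1))) := by ring
      exact le_trans ih hkey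

lemma key_sum_bound {α : ℝ} (hα0 : 0 < α) (hα1 : α < 1) (n : ℕ) (hn : 1 ≤ n) :
    ∑ k ∈ Icc 1 n, |grunwaldW α k| * ((n - k : ℕ) : ℝ) ^ α ≤ (n : ℝ) ^ α - (1 - α) := by
  have h1 : ∑ k ∈ Icc 1 n, |grunwaldW α k| * ((n - k : ℕ) : ℝ) ^ α
      ≤ ∑ k ∈ Icc 1 n, |grunwaldW α k| * (n : ℝ) ^ α := by
    apply Finset.sum_le_sum
    intro k hk
    apply mul_le_mul_of_nonneg_left _ (abs_nonneg _)
    apply Real.rpow_le_rpow (by positivity) _ hα0.le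
    exact_mod_cast Nat.sub_le n k
  rw [← Finset.sum_mul, sum_abs_grunwaldW hα0 hα1] at h1
  have h2 := key_prod_lower hα0 hα1 n hn
  have h3 : (1 - ∏ k ∈ Icc 1 n, (1 - α / (k : ℝ))) * (n : ℝ) ^ α
      = (n : ℝ) ^ α - (n : ℝ) ^ α * ∏ k ∈ Icc 1 n, (1 - α / (k : ℝ)) := by ring
  rw [h3] at h1
  linarith
set_option maxHeartbeats 1000000 in
/-- growth estimate for the errors of the third order scheme. -/
theorem third_order_error_estimate
    (α h A : ℝ) (hα0 : 0 < α) (hα1 : α < 1) (hh0 : 0 < h) (hh1 : h < 1) (hA : 0 < A)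
    (e Aseq : ℕ → ℝ) (he0 : e 0 = 0)
    (hAseq : ∀ n : ℕ, 1 ≤ n → |Aseq n| < A * h ^ (3 + α))
    (hrec : ∀ n : ℕ, 1 ≤ n →
      e n = (1 + h ^ α * (1 - 17 * α / 24 + α ^ 2 / 8))⁻¹ *
          ((α - h ^ α * (11 * α / 12 - α ^ 2 / 4)) * e (n - 1) +
            (α * (1 - α) / 2 + h ^ α * (5 * α / 24 - α ^ 2 / 8)) * e (n - 2) +
            ∑ k ∈ Finset.Icc 3 n, |grunwaldW α k| * e (n - k)) + Aseq n) :
    ∀ n : ℕ, 1 ≤ n →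
      |e n| < 10 * A / ((1 - α) * (2 : ℝ) ^ α) * (n : ℝ) ^ α * h ^ (3 + α) := by
  have h2α : (0:ℝ) < (2:ℝ) ^ α := Real.rpow_pos_of_pos (by norm_num) α
  have h2α2 : (2:ℝ) ^ α ≤ 2 := by
    calc (2:ℝ) ^ α ≤ (2:ℝ) ^ (1:ℝ) :=
          Real.rpow_le_rpow_of_exponent_le (by norm_num) hα1.le
      _ = 2 := Real.rpow_one 2
  have hhα0 : (0:ℝ) < h ^ α := Real.rpow_pos_of_pos hh0 α
  have hhα1 : h ^ α < 1 := Real.rpow_lt_one hh0.le hh1 hα0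
  have hh3 : (0:ℝ) < h ^ (3 + α) := Real.rpow_pos_of_pos hh0 _
  set B : ℝ := 10 * A / ((1 - α) * (2:ℝ) ^ α) with hBdef
  have hB : 0 < B := div_pos (by linarith) (mul_pos (by linarith) h2α)

  have hprod2 : (1 - α) * (2:ℝ) ^ α ≤ 2 := by nlinarith
  have hAleB : A ≤ B := by
    rw [hBdef, le_div_iff₀ (mul_pos (by linarith : (0:ℝ) < 1 - α) h2α)]
    nlinarith
  have hBA : A ≤ B * (1 - α) := by
    have hne1 : (1:ℝ) - α ≠ 0 := by linarith
    have hB1 : B * (1 - α) = 10 * A / (2:ℝ) ^ α := by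
      rw [hBdef]; field_simp
    rw [hB1, le_div_iff₀ h2α]; nlinarith
  -- coefficients
  have hγbr : (0:ℝ) < 1 - 17 * α / 24 + α ^ 2 / 8 := by nlinarith
  have hγ1 : (1:ℝ) ≤ 1 + h ^ α * (1 - 17 * α / 24 + α ^ 2 / 8) := by
    nlinarith [mul_pos hhα0 hγbr]
  have hp1nn : (0:ℝ) ≤ 11 * α / 12 - α ^ 2 / 4 := by nlinarith
  have hp2nn : (0:ℝ) ≤ 5 * α / 24 - α ^ 2 / 8 := by nlinarith
  have hg1nn : (0:ℝ) ≤ α - h ^ α * (11 * α / 12 - α ^ 2 / 4) := by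
    nlinarith [mul_le_of_le_one_left hp1nn hhα1.le]
  have hg2nn : (0:ℝ) ≤ α * (1 - α) / 2 + h ^ α * (5 * α / 24 - α ^ 2 / 8) := by
    nlinarith [mul_nonneg hhα0.le hp2nn]
  set γ : ℝ := 1 + h ^ α * (1 - 17 * α / 24 + α ^ 2 / 8) with hγdef
  set g1 : ℝ := α - h ^ α * (11 * α / 12 - α ^ 2 / 4) with hg1def
  set g2 : ℝ := α * (1 - α) / 2 + h ^ α * (5 * α / 24 - α ^ 2 / 8) with hg2def
  have hγ0 : (0:ℝ) < γ := by linarith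
  have hγinv : γ⁻¹ ≤ 1 := inv_le_one_of_one_le₀ hγ1
  have hγinv0 : (0:ℝ) ≤ γ⁻¹ := by positivity
  clear_value γ g1 g2
  intro N
  induction N using Nat.strong_induction_on with
  | _ N IH =>
    intro hN
    have Hle : ∀ m : ℕ, m < N → |e m| ≤ B * (m : ℝ) ^ α * h ^ (3 + α) := by
      intro m hm
      rcases Nat.eq_zero_or_pos m with rfl | hm1
      · rw [he0]
        simp [Real.zero_rpow hα0.ne']
      · exact (IH m hm hm1).le
    rcases eq_or_lt_of_le hN with h1 | h2
    · -- N = 1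
      have hN1 : N = 1 := h1.symm
      subst hN1
      have hr := hrec 1 le_rfl
      rw [Finset.Icc_eq_empty (by omega : ¬ (3:ℕ) ≤ 1), Finset.sum_empty] at hr
      norm_num [he0] at hr
      have hr1 : e 1 = Aseq 1 := by rw [hr]
      rw [hr1]
      have hA1 := hAseq 1 le_rfl
      have h1α : ((1:ℕ) : ℝ) ^ α = 1 := by norm_num
      rw [h1α]
      have : A * h ^ (3 + α) ≤ B * 1 * h ^ (3 + α) := by
        rw [mul_one]
        exact mul_le_mul_of_nonneg_right hAleB hh3.le
      linarith
    · -- 2 ≤ N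
      have hN2 : 2 ≤ N := h2
      set x1 : ℝ := ((N - 1 : ℕ) : ℝ) ^ α with hx1def
      set x2 : ℝ := ((N - 2 : ℕ) : ℝ) ^ α with hx2def
      have hx1nn : 0 ≤ x1 := Real.rpow_nonneg (by positivity) α
      have hx2nn : 0 ≤ x2 := Real.rpow_nonneg (by positivity) α
      have hx21 : x2 ≤ x1 := by
        apply Real.rpow_le_rpow (by positivity) _ hα0.le
        exact_mod_cast Nat.sub_le_sub_left (by omega : 1 ≤ 2) N
      clear_value x1 x2
      set S : ℝ := g1 * x1 + g2 * x2
          + ∑ k ∈ Finset.Icc 3 N, |grunwaldW α k| * ((N - k : ℕ) : ℝ) ^ α with hSdef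
      have hsum_nn : (0:ℝ) ≤ ∑ k ∈ Finset.Icc 3 N, |grunwaldW α k| * ((N - k : ℕ) : ℝ) ^ α := by
        apply Finset.sum_nonneg
        intro k _
        exact mul_nonneg (abs_nonneg _) (Real.rpow_nonneg (by positivity) α)
      have hS0 : 0 ≤ S := by
        have := mul_nonneg hg1nn hx1nn
        have := mul_nonneg hg2nn hx2nn
        rw [hSdef]; linarith
      clear_value S
      -- bound |e N|
      have hXbound : |g1 * e (N - 1) + g2 * e (N - 2)
            + ∑ k ∈ Finset.Icc 3 N, |grunwaldW α k| * e (N - k)|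
          ≤ B * h ^ (3 + α) * S := by
        have hx1b := Hle (N - 1) (by omega)
        have hx2b := Hle (N - 2) (by omega)
        rw [← hx1def] at hx1b
        rw [← hx2def] at hx2b
        have t1 : |g1 * e (N - 1)| ≤ g1 * (B * x1 * h ^ (3 + α)) := by
          rw [abs_mul, abs_of_nonneg hg1nn]
          exact mul_le_mul_of_nonneg_left hx1b hg1nn
        have t2 : |g2 * e (N - 2)| ≤ g2 * (B * x2 * h ^ (3 + α)) := by
          rw [abs_mul, abs_of_nonneg hg2nn]
          exact mul_le_mul_of_nonneg_left hx2b hg2nn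
        have t3 : |∑ k ∈ Finset.Icc 3 N, |grunwaldW α k| * e (N - k)|
            ≤ ∑ k ∈ Finset.Icc 3 N, |grunwaldW α k| * (B * ((N - k : ℕ) : ℝ) ^ α * h ^ (3 + α)) := by
          refine (Finset.abs_sum_le_sum_abs _ _).trans ?_
          apply Finset.sum_le_sum
          intro k hk
          rw [abs_mul, abs_abs]
          exact mul_le_mul_of_nonneg_left (Hle (N - k) (by
            have := (Finset.mem_Icc.mp hk).1; omega)) (abs_nonneg _)
        have hsum_eq : ∑ k ∈ Finset.Icc 3 N, |grunwaldW α k| * (B * ((N - k : ℕ) : ℝ) ^ α * h ^ (3 + α))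
            = B * h ^ (3 + α) * ∑ k ∈ Finset.Icc 3 N, |grunwaldW α k| * ((N - k : ℕ) : ℝ) ^ α := by
          rw [Finset.mul_sum]
          apply Finset.sum_congr rfl
          intro k _
          ring
        calc |g1 * e (N - 1) + g2 * e (N - 2)
              + ∑ k ∈ Finset.Icc 3 N, |grunwaldW α k| * e (N - k)|
            ≤ |g1 * e (N - 1) + g2 * e (N - 2)|
              + |∑ k ∈ Finset.Icc 3 N, |grunwaldW α k| * e (N - k)| := abs_add_le _ _
          _ ≤ |g1 * e (N - 1)| + |g2 * e (N - 2)|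
              + |∑ k ∈ Finset.Icc 3 N, |grunwaldW α k| * e (N - k)| := by
              have := abs_add_le (g1 * e (N - 1)) (g2 * e (N - 2))
              linarith
          _ ≤ g1 * (B * x1 * h ^ (3 + α)) + g2 * (B * x2 * h ^ (3 + α))
              + ∑ k ∈ Finset.Icc 3 N, |grunwaldW α k| * (B * ((N - k : ℕ) : ℝ) ^ α * h ^ (3 + α)) := by
              linarith
          _ = B * h ^ (3 + α) * S := by
              rw [hsum_eq, hSdef]; ring
      -- bound S
      have hSbound : S ≤ (N : ℝ) ^ α - (1 - α) := by
        have hw1 : |grunwaldW α 1| = α := by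
          rw [show (1:ℕ) = 0 + 1 from rfl, abs_grunwaldW hα0 hα1 0]
          norm_num
        have hw2 : |grunwaldW α 2| = α * (1 - α) / 2 := by
          rw [show (2:ℕ) = 1 + 1 from rfl, abs_grunwaldW hα0 hα1 1]
          rw [Finset.Icc_self, Finset.prod_singleton]
          push_cast
          ring
        have hsplit : ∑ k ∈ Finset.Icc 1 N, |grunwaldW α k| * ((N - k : ℕ) : ℝ) ^ α
            = |grunwaldW α 1| * x1 + |grunwaldW α 2| * x2
              + ∑ k ∈ Finset.Icc 3 N, |grunwaldW α k| * ((N - k : ℕ) : ℝ) ^ α := by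
          have e1 : Finset.Icc 1 N = Finset.Ioc 0 N := by ext x; simp; omega
          have e3 : Finset.Icc 3 N = Finset.Ioc 2 N := by ext x; simp; omega
          rw [e1, e3, ← Finset.sum_Ioc_consecutive _ (by omega : (0:ℕ) ≤ 2) hN2]
          have e02 : Finset.Ioc (0:ℕ) 2 = {1, 2} := rfl
          rw [e02, Finset.sum_insert (by decide), Finset.sum_singleton,
            hx1def, hx2def]
        have hK := key_sum_bound hα0 hα1 N hN
        rw [hsplit, hw1, hw2] at hK
        -- coefficient comparison
        have hp12 : 5 * α / 24 - α ^ 2 / 8 ≤ 11 * α / 12 - α ^ 2 / 4 := by nlinarith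
        have k1 : (5 * α / 24 - α ^ 2 / 8) * x2 ≤ (5 * α / 24 - α ^ 2 / 8) * x1 :=
          mul_le_mul_of_nonneg_left hx21 hp2nn
        have k2 : (5 * α / 24 - α ^ 2 / 8) * x1 ≤ (11 * α / 12 - α ^ 2 / 4) * x1 :=
          mul_le_mul_of_nonneg_right hp12 hx1nn
        have key : h ^ α * ((5 * α / 24 - α ^ 2 / 8) * x2)
            ≤ h ^ α * ((11 * α / 12 - α ^ 2 / 4) * x1) :=
          mul_le_mul_of_nonneg_left (k1.trans k2) hhα0.le
        have hcoef : g1 * x1 + g2 * x2 ≤ α * x1 + α * (1 - α) / 2 * x2 := by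
          rw [hg1def, hg2def]; nlinarith [key]
        rw [hSdef]
        linarith
      -- conclude
      have hAN := hAseq N hN
      have hr := hrec N hN
      have habs : |e N| ≤ γ⁻¹ * (B * h ^ (3 + α) * S) + |Aseq N| := by
        rw [hr]
        refine (abs_add_le _ _).trans ?_
        have : |γ⁻¹ * (g1 * e (N - 1) + g2 * e (N - 2)
              + ∑ k ∈ Finset.Icc 3 N, |grunwaldW α k| * e (N - k))|
            ≤ γ⁻¹ * (B * h ^ (3 + α) * S) := by
          rw [abs_mul, abs_of_nonneg hγinv0]
          exact mul_le_mul_of_nonneg_left hXbound hγinv0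
        linarith
      have hfin1 : γ⁻¹ * (B * h ^ (3 + α) * S) ≤ B * h ^ (3 + α) * S := by
        have hnn : (0:ℝ) ≤ B * h ^ (3 + α) * S :=
          mul_nonneg (mul_nonneg hB.le hh3.le) hS0
        calc γ⁻¹ * (B * h ^ (3 + α) * S) ≤ 1 * (B * h ^ (3 + α) * S) :=
              mul_le_mul_of_nonneg_right hγinv hnn
          _ = B * h ^ (3 + α) * S := one_mul _
      have hfin2 : B * h ^ (3 + α) * S ≤ B * h ^ (3 + α) * ((N : ℝ) ^ α - (1 - α)) :=
        mul_le_mul_of_nonneg_left hSbound (by positivity)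
      have hfin3 : B * h ^ (3 + α) * ((N : ℝ) ^ α - (1 - α)) + A * h ^ (3 + α)
          ≤ B * (N : ℝ) ^ α * h ^ (3 + α) := by
        have := mul_le_mul_of_nonneg_right hBA hh3.le
        nlinarith [this]
      calc |e N| ≤ γ⁻¹ * (B * h ^ (3 + α) * S) + |Aseq N| := habs
        _ < B * h ^ (3 + α) * ((N : ℝ) ^ α - (1 - α)) + A * h ^ (3 + α) := by linarith
        _ ≤ B * (N : ℝ) ^ α * h ^ (3 + α) := hfin3
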